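/- Let G be a finite simple graph. Then the number of edges of the tangent graph tG plus the number of edges of G equals Σ_{i ∈ V} deg_G(i)². -/

import Mathlib

open Finset SimpleGraph

/-- The tangent graph `tG` of a simple graph `G`: vertices are the darts of `G`,
with `u, v` adjacent iff `π₊(u) = π(v)` or `π(u) = π₊(v)`. -/
def tangentGraph {V : Type*} (G : SimpleGraph V) : SimpleGraph G.Dart where
  Adj u v := u.snd = v.fst ∨ u.fst = v.snd
  symm := ⟨fun u v h => h.symm.imp Eq.symm Eq.symm⟩
  loopless := ⟨fun u h => h.elim (fun h1 => u.snd_ne_fst h1) (fun h2 => u.fst_ne_snd h2)⟩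

/-- The complete tangent graph `τG` of a simple graph `G`: vertices are the darts of `G`,
with `u, v` adjacent iff their base points are adjacent in `G`. -/
def completeTangentGraph {V : Type*} (G : SimpleGraph V) : SimpleGraph G.Dart where
  Adj u v := G.Adj u.fst v.fst
  symm := ⟨fun u v h => h.symm⟩
  loopless := ⟨fun u h => G.loopless.1 _ h⟩

instance {V : Type*} [DecidableEq V] (G : SimpleGraph V) :
    DecidableRel (tangentGraph G).Adj :=
  fun u v => inferInstanceAs (Decidable (u.snd = v.fst ∨ u.fst = v.snd))

instance {V : Type*} (G : SimpleGraph V) [DecidableRel G.Adj] :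
    DecidableRel (completeTangentGraph G).Adj :=
  fun u v => inferInstanceAs (Decidable (G.Adj u.fst v.fst))

/-- The darts of `G` based at the vertex `i`. -/
def dartsAt {V : Type*} [Fintype V] [DecidableEq V] (G : SimpleGraph V)
    [DecidableRel G.Adj] (i : V) : Finset G.Dart :=
  Finset.univ.filter fun u => u.fst = i

/-- The coefficient function `dφ` of the gradient of `φ`. -/
def dop {V : Type*} (G : SimpleGraph V) (φ : V → ℝ) (u : G.Dart) : ℝ :=
  φ u.snd - φ u.fst

/-- The Laplacian of `φ : V → ℝ` on `G`, `Δφ(i) = -2·Σ_{π(u)=i} dφ(u)`. -/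
def gLap {V : Type*} [Fintype V] [DecidableEq V] (G : SimpleGraph V)
    [DecidableRel G.Adj] (φ : V → ℝ) (i : V) : ℝ :=
  -2 * ∑ u ∈ dartsAt G i, dop G φ u

/-- The Laplacian of a real function on the vertices of an arbitrary finite simple graph:
`Δ_H h(x) = -2·Σ_{y ~ x} (h y - h x)`. -/
def lap {W : Type*} [Fintype W] (H : SimpleGraph W) [DecidableRel H.Adj]
    (h : W → ℝ) (x : W) : ℝ :=
  -2 * ∑ y ∈ H.neighborFinset x, (h y - h x)

/-- The divergence of `f : Darts(G) → ℝ`, `Div f(i) = Σ_{π(u)=i} (f(ū) - f(u))`. -/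
def divg {V : Type*} [Fintype V] [DecidableEq V] (G : SimpleGraph V)
    [DecidableRel G.Adj] (f : G.Dart → ℝ) (i : V) : ℝ :=
  ∑ u ∈ dartsAt G i, (f u.symm - f u)


lemma dart_snd_fiber_card {V : Type*} [Fintype V] [DecidableEq V] (G : SimpleGraph V)
    [DecidableRel G.Adj] (i : V) :
    (Finset.univ.filter fun u : G.Dart => u.snd = i).card = G.degree i := by
  rw [← G.dart_fst_fiber_card_eq_degree i]
  apply Finset.card_bij (fun u _ => u.symm)
  · intro u hu; simp_all [Dart.symm]
  · intro a _ b _ h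
    have := congrArg Dart.symm h; simpa using this
  · intro b hb
    exact ⟨b.symm, by simp_all [Dart.symm], by simp⟩

lemma deg_tangent {V : Type*} [Fintype V] [DecidableEq V] (G : SimpleGraph V)
    [DecidableRel G.Adj] (u : G.Dart) :
    (tangentGraph G).degree u + 1 = G.degree u.snd + G.degree u.fst := by
  classical
  have hnb : (tangentGraph G).neighborFinset u =
      (Finset.univ.filter fun v : G.Dart => v.fst = u.snd) ∪
      (Finset.univ.filter fun v : G.Dart => v.snd = u.fst) := by
    ext v
    simp [tangentGraph, neighborFinset, neighborSet, eq_comm, or_comm]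
    exact Set.mem_toFinset.trans (by rw [Set.mem_setOf_eq]; exact ⟨fun h => h.symm.imp id Eq.symm, fun h => h.symm.imp Eq.symm id⟩)
  have hint : ((Finset.univ.filter fun v : G.Dart => v.fst = u.snd) ∩
      (Finset.univ.filter fun v : G.Dart => v.snd = u.fst)) = {u.symm} := by
    ext v
    simp only [Finset.mem_inter, Finset.mem_filter, Finset.mem_univ, true_and,
      Finset.mem_singleton]
    constructor
    · rintro ⟨h1, h2⟩; exact Dart.ext _ _ (Prod.ext h1 h2)
    · rintro rfl; simp [Dart.symm]
  have := Finset.card_union_add_card_inter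
    (Finset.univ.filter fun v : G.Dart => v.fst = u.snd)
    (Finset.univ.filter fun v : G.Dart => v.snd = u.fst)
  rw [hint, Finset.card_singleton, G.dart_fst_fiber_card_eq_degree,
    dart_snd_fiber_card] at this
  rw [degree, hnb, this]

/-- `|E_{tG}| + |E_G| = Σ_i deg_G(i)²`. -/
theorem card_edges_tangentGraph {V : Type*} [Fintype V] [DecidableEq V]
    (G : SimpleGraph V) [DecidableRel G.Adj] :
    (tangentGraph G).edgeFinset.card + G.edgeFinset.card = ∑ i : V, G.degree i ^ 2 := by
  have h1 : ∑ u : G.Dart, ((tangentGraph G).degree u + 1) =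
      ∑ u : G.Dart, (G.degree u.snd + G.degree u.fst) :=
    Finset.sum_congr rfl fun u _ => deg_tangent G u
  have h2 : ∑ u : G.Dart, G.degree u.fst = ∑ i : V, G.degree i ^ 2 := by
    rw [← Finset.sum_fiberwise Finset.univ (fun u : G.Dart => u.fst)
      (fun u => G.degree u.fst)]
    refine Finset.sum_congr rfl fun i _ => ?_
    rw [Finset.sum_congr rfl (fun u hu => by
      rw [(Finset.mem_filter.mp hu).2]), Finset.sum_const,
      G.dart_fst_fiber_card_eq_degree, smul_eq_mul, sq]
  have h3 : ∑ u : G.Dart, G.degree u.snd = ∑ i : V, G.degree i ^ 2 := by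
    rw [← Finset.sum_fiberwise Finset.univ (fun u : G.Dart => u.snd)
      (fun u => G.degree u.snd)]
    refine Finset.sum_congr rfl fun i _ => ?_
    rw [Finset.sum_congr rfl (fun u hu => by
      rw [(Finset.mem_filter.mp hu).2]), Finset.sum_const,
      dart_snd_fiber_card, smul_eq_mul, sq]
  have h4 : ∑ u : G.Dart, (tangentGraph G).degree u = 2 * (tangentGraph G).edgeFinset.card :=
    sum_degrees_eq_twice_card_edges _
  have h5 : Fintype.card G.Dart = 2 * G.edgeFinset.card := G.dart_card_eq_twice_card_edges
  rw [Finset.sum_add_distrib, Finset.sum_add_distrib, h2, h3, h4,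
    Finset.sum_const, smul_eq_mul, mul_one, Finset.card_univ, h5] at h1
  omega
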